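/- Let T be a commutative monad on a cartesian monoidal category D. Then T is weakly affine (T1 is an internal group) if and only if for all objects X, Y, Z the associativity square with vertices TX × TY × TZ, TX × T(Y × Z), T(X × Y) × TZ, T(X × Y × Z) and maps id × c_{Y,Z}, c_{X,Y} × id, c_{X,Y×Z}, c_{X×Y,Z} is a pullback in D. -/

import Mathlib

open CategoryTheory CategoryTheory.Limits

set_option maxRecDepth 4000

universe v u

variable {D : Type u} [Category.{v} D] [HasFiniteProducts D]

/-- A commutative (symmetric monoidal) monad on a cartesian monoidal category:
a monad `T` equipped with a lax monoidal structure
`c_{X,Y} : TX ⨯ TY ⟶ T(X ⨯ Y)` which is natural, associative, unital,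
symmetric, and compatible with the unit and multiplication of the monad. -/
structure CommMonad (D : Type u) [Category.{v} D] [HasFiniteProducts D] where
  T : Monad D
  c : ∀ X Y : D, T.obj X ⨯ T.obj Y ⟶ T.obj (X ⨯ Y)
  c_natural : ∀ {X X' Y Y' : D} (f : X ⟶ X') (g : Y ⟶ Y'),
    prod.map (T.map f) (T.map g) ≫ c X' Y' = c X Y ≫ T.map (prod.map f g)
  c_assoc : ∀ X Y Z : D,
    prod.map (𝟙 (T.obj X)) (c Y Z) ≫ c X (Y ⨯ Z) ≫
        T.map (Limits.prod.associator X Y Z).inv =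
      (Limits.prod.associator _ _ _).inv ≫ prod.map (c X Y) (𝟙 (T.obj Z)) ≫
        c (X ⨯ Y) Z
  c_unit_right : ∀ X : D,
    prod.lift (𝟙 (T.obj X)) (terminal.from _ ≫ T.η.app (⊤_ D)) ≫
        c X (⊤_ D) ≫ T.map prod.fst = 𝟙 (T.obj X)
  c_unit_left : ∀ X : D,
    prod.lift (terminal.from _ ≫ T.η.app (⊤_ D)) (𝟙 (T.obj X)) ≫
        c (⊤_ D) X ≫ T.map prod.snd = 𝟙 (T.obj X)
  c_symm : ∀ X Y : D,
    c X Y ≫ T.map (prod.braiding X Y).hom = (prod.braiding _ _).hom ≫ c Y X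
  c_eta : ∀ X Y : D,
    prod.map (T.η.app X) (T.η.app Y) ≫ c X Y = T.η.app (X ⨯ Y)
  c_mu : ∀ X Y : D,
    prod.map (T.μ.app X) (T.μ.app Y) ≫ c X Y =
      c (T.obj X) (T.obj Y) ≫ T.map (c X Y) ≫ T.μ.app (X ⨯ Y)

namespace CommMonad

variable (S : CommMonad D)

/-- The canonical internal monoid multiplication on `T1`:
`c_{1,1} : T1 ⨯ T1 ⟶ T(1 ⨯ 1) ≅ T1`. -/
noncomputable def unitMul : S.T.obj (⊤_ D) ⨯ S.T.obj (⊤_ D) ⟶ S.T.obj (⊤_ D) :=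
  S.c (⊤_ D) (⊤_ D) ≫ S.T.map (terminal.from _)

/-- The unit of the internal monoid `T1`, given by the monad unit `η₁`. -/
noncomputable def unitOne : (⊤_ D) ⟶ S.T.obj (⊤_ D) := S.T.η.app (⊤_ D)

/-- `T` is weakly affine if the internal commutative monoid `T1` is an
internal group, i.e. it admits an inversion morphism. -/
noncomputable def WeaklyAffine : Prop :=
  ∃ ι : S.T.obj (⊤_ D) ⟶ S.T.obj (⊤_ D),
    prod.lift (𝟙 _) ι ≫ S.unitMul = terminal.from _ ≫ S.unitOne ∧
    prod.lift ι (𝟙 _) ≫ S.unitMul = terminal.from _ ≫ S.unitOne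

/-- The unit of the effect monoid `Kl_T(X, 1)`: the discard map of the
Kleisli category, `del_X ≫ η₁`. -/
noncomputable def kOne (X : D) : X ⟶ S.T.obj (⊤_ D) :=
  terminal.from X ≫ S.unitOne

/-- The convolution multiplication of the effect monoid `Kl_T(X, 1)`:
copy, apply both effects, then multiply via `c_{1,1}` and `T(1 ⨯ 1) ≅ T1`. -/
noncomputable def kMul {X : D} (a b : X ⟶ S.T.obj (⊤_ D)) :
    X ⟶ S.T.obj (⊤_ D) :=
  prod.lift a b ≫ S.unitMul

end CommMonad


namespace CommMonad

variable (S : CommMonad D)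

/-! ### A calculus of generalized elements for the lax monoidal structure -/

/-- Pairing of two generalized elements via `c`. -/
noncomputable def cc {A X Y : D} (t : A ⟶ S.T.obj X) (u : A ⟶ S.T.obj Y) :
    A ⟶ S.T.obj (X ⨯ Y) :=
  prod.lift t u ≫ S.c X Y

/-- The "total mass" of a generalized element. -/
noncomputable def mass {A X : D} (t : A ⟶ S.T.obj X) : A ⟶ S.T.obj (⊤_ D) :=
  t ≫ S.T.map (terminal.from X)

/-- The action of `T1` on `TX`. -/
noncomputable def act {A X : D} (t : A ⟶ S.T.obj X) (s : A ⟶ S.T.obj (⊤_ D)) :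
    A ⟶ S.T.obj X :=
  S.cc t s ≫ S.T.map prod.fst

/-- Multiplication of generalized elements of `T1`. -/
noncomputable def mul {A : D} (s s' : A ⟶ S.T.obj (⊤_ D)) : A ⟶ S.T.obj (⊤_ D) :=
  prod.lift s s' ≫ S.unitMul

lemma cc_map {A X X' Y Y' : D} (t : A ⟶ S.T.obj X) (u : A ⟶ S.T.obj Y)
    (f : X ⟶ X') (g : Y ⟶ Y') :
    S.cc t u ≫ S.T.map (prod.map f g) = S.cc (t ≫ S.T.map f) (u ≫ S.T.map g) := by
  rw [cc, cc, Category.assoc, ← S.c_natural f g, ← Category.assoc, prod.lift_map]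

lemma cc_assoc' {A X Y Z : D} (t : A ⟶ S.T.obj X) (u : A ⟶ S.T.obj Y)
    (v : A ⟶ S.T.obj Z) :
    S.cc t (S.cc u v) ≫ S.T.map (prod.associator X Y Z).inv =
      S.cc (S.cc t u) v := by
  have h := S.c_assoc X Y Z
  have h1 : prod.lift t (S.cc u v) =
      prod.lift t (prod.lift u v) ≫ prod.map (𝟙 (S.T.obj X)) (S.c Y Z) := by
    simp [cc]
  have h2 : prod.lift t (prod.lift u v) ≫ (Limits.prod.associator _ _ _).inv ≫
      prod.map (S.c X Y) (𝟙 (S.T.obj Z)) = prod.lift (S.cc t u) v := by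
    rw [cc, ← Category.assoc]
    have h3 : prod.lift t (prod.lift u v) ≫ (Limits.prod.associator (S.T.obj X)
        (S.T.obj Y) (S.T.obj Z)).inv = prod.lift (prod.lift t u) v := by
      apply Limits.prod.hom_ext
      · apply Limits.prod.hom_ext <;> simp [prod.lift_fst, prod.lift_snd, prod.lift_fst_assoc, prod.lift_snd_assoc]
      · simp [prod.lift_fst, prod.lift_snd, prod.lift_fst_assoc, prod.lift_snd_assoc]
    rw [h3]
    apply Limits.prod.hom_ext <;> simp
  calc S.cc t (S.cc u v) ≫ S.T.map (prod.associator X Y Z).inv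
      = prod.lift t (prod.lift u v) ≫ prod.map (𝟙 (S.T.obj X)) (S.c Y Z) ≫
          S.c X (Y ⨯ Z) ≫ S.T.map (Limits.prod.associator X Y Z).inv := by
        rw [cc, h1]; simp only [Category.assoc]
    _ = prod.lift t (prod.lift u v) ≫ (Limits.prod.associator _ _ _).inv ≫
          prod.map (S.c X Y) (𝟙 (S.T.obj Z)) ≫ S.c (X ⨯ Y) Z := by rw [h]
    _ = S.cc (S.cc t u) v := by
        rw [cc, ← h2]; simp only [Category.assoc]

lemma cc_symm' {A X Y : D} (t : A ⟶ S.T.obj X) (u : A ⟶ S.T.obj Y) :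
    S.cc t u ≫ S.T.map (prod.braiding X Y).hom = S.cc u t := by
  have : prod.lift t u ≫ (prod.braiding (S.T.obj X) (S.T.obj Y)).hom =
      prod.lift u t := by simp [prod.lift_fst, prod.lift_snd, prod.lift_fst_assoc, prod.lift_snd_assoc]
  rw [cc, cc, Category.assoc, S.c_symm X Y, ← Category.assoc, this]

lemma cc_fst {A X Y : D} (t : A ⟶ S.T.obj X) (u : A ⟶ S.T.obj Y) :
    S.cc t u ≫ S.T.map prod.fst = S.act t (S.mass u) := by
  have : (prod.fst : X ⨯ Y ⟶ X) =
      prod.map (𝟙 X) (terminal.from Y) ≫ prod.fst := by simp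
  rw [act, mass, this, S.T.map_comp, ← Category.assoc, cc_map]
  simp

lemma cc_snd {A X Y : D} (t : A ⟶ S.T.obj X) (u : A ⟶ S.T.obj Y) :
    S.cc t u ≫ S.T.map prod.snd = S.act u (S.mass t) := by
  have : (prod.snd : X ⨯ Y ⟶ Y) = (prod.braiding X Y).hom ≫ prod.fst := by simp [prod.lift_fst, prod.lift_snd, prod.lift_fst_assoc, prod.lift_snd_assoc]
  rw [this, S.T.map_comp, ← Category.assoc, cc_symm', cc_fst]

lemma act_one {A X : D} (t : A ⟶ S.T.obj X) :
    S.act t (terminal.from A ≫ S.unitOne) = t := by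
  have h : prod.lift t (terminal.from A ≫ S.unitOne) =
      t ≫ prod.lift (𝟙 (S.T.obj X)) (terminal.from _ ≫ S.T.η.app (⊤_ D)) := by
    rw [prod.comp_lift]
    congr 1
    · simp
    · rw [← Category.assoc]; congr 1; apply terminal.hom_ext
  rw [act, cc, h]
  simp only [Category.assoc, S.c_unit_right X, Category.comp_id]

lemma act_map {A X X' : D} (t : A ⟶ S.T.obj X) (s : A ⟶ S.T.obj (⊤_ D))
    (f : X ⟶ X') :
    S.act t s ≫ S.T.map f = S.act (t ≫ S.T.map f) s := by
  have : (prod.fst : X ⨯ ⊤_ D ⟶ X) ≫ f =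
      prod.map f (𝟙 (⊤_ D)) ≫ prod.fst := by simp
  rw [act, Category.assoc, ← S.T.map_comp, this, S.T.map_comp, ← Category.assoc,
    cc_map, act]
  simp

lemma mass_top {A : D} (s : A ⟶ S.T.obj (⊤_ D)) : S.mass s = s := by
  have : terminal.from (⊤_ D) = 𝟙 (⊤_ D) := terminal.hom_ext _ _
  rw [mass, this, S.T.map_id, Category.comp_id]

lemma mul_cc {A : D} (s s' : A ⟶ S.T.obj (⊤_ D)) :
    S.mul s s' = S.cc s s' ≫ S.T.map (terminal.from ((⊤_ D) ⨯ (⊤_ D))) := by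
  simp [mul, cc, unitMul]

lemma mul_eq_act {A : D} (s s' : A ⟶ S.T.obj (⊤_ D)) :
    S.mul s s' = S.act s s' := by
  rw [mul_cc, act,
    show (terminal.from ((⊤_ D) ⨯ (⊤_ D))) = (prod.fst : ((⊤_ D) ⨯ (⊤_ D)) ⟶ ⊤_ D)
      from terminal.hom_ext _ _]

lemma mass_cc {A X Y : D} (t : A ⟶ S.T.obj X) (u : A ⟶ S.T.obj Y) :
    S.mass (S.cc t u) = S.mul (S.mass t) (S.mass u) := by
  have : terminal.from (X ⨯ Y) =
      prod.map (terminal.from X) (terminal.from Y) ≫ terminal.from ((⊤_ D) ⨯ (⊤_ D)) :=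
    terminal.hom_ext _ _
  rw [mass, this, S.T.map_comp, ← Category.assoc, cc_map, mul_cc, mass, mass]

lemma act_act {A X : D} (t : A ⟶ S.T.obj X) (s s' : A ⟶ S.T.obj (⊤_ D)) :
    S.act (S.act t s) s' = S.act t (S.mul s s') := by
  have e1 : S.cc (S.cc t s ≫ S.T.map prod.fst) s' =
      S.cc (S.cc t s) s' ≫ S.T.map (prod.map prod.fst (𝟙 (⊤_ D))) := by
    rw [cc_map]; simp
  have e2 : (prod.map (prod.fst : X ⨯ ⊤_ D ⟶ X) (𝟙 (⊤_ D))) ≫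
      (prod.fst : X ⨯ ⊤_ D ⟶ X) = prod.fst ≫ prod.fst := by simp
  have e3 : (Limits.prod.associator X (⊤_ D) (⊤_ D)).inv ≫
      (prod.fst ≫ prod.fst : (X ⨯ ⊤_ D) ⨯ ⊤_ D ⟶ X) =
      prod.map (𝟙 X) (terminal.from ((⊤_ D) ⨯ (⊤_ D))) ≫ prod.fst := by
    simp [prod.lift_fst, prod.lift_snd, prod.lift_fst_assoc, prod.lift_snd_assoc]
  calc S.act (S.act t s) s'
      = S.cc (S.cc t s ≫ S.T.map prod.fst) s' ≫ S.T.map prod.fst := rfl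
    _ = S.cc (S.cc t s) s' ≫
          S.T.map (prod.map prod.fst (𝟙 (⊤_ D)) ≫ prod.fst) := by
        rw [e1, S.T.map_comp, Category.assoc]
    _ = (S.cc t (S.cc s s') ≫ S.T.map (Limits.prod.associator X (⊤_ D) (⊤_ D)).inv) ≫
          S.T.map (prod.fst ≫ prod.fst) := by rw [cc_assoc', e2]
    _ = S.cc t (S.cc s s') ≫
          S.T.map (prod.map (𝟙 X) (terminal.from ((⊤_ D) ⨯ (⊤_ D))) ≫ prod.fst) := by
        simp only [Category.assoc, ← S.T.map_comp]
        rw [e3]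
    _ = S.cc t (S.cc s s' ≫ S.T.map (terminal.from ((⊤_ D) ⨯ (⊤_ D)))) ≫
          S.T.map prod.fst := by
        rw [S.T.map_comp, ← Category.assoc, cc_map, S.T.map_id, Category.comp_id]
    _ = S.act t (S.mul s s') := by rw [← mul_cc]; rfl

lemma cc_act_right {A X Y : D} (t : A ⟶ S.T.obj X) (u : A ⟶ S.T.obj Y)
    (s : A ⟶ S.T.obj (⊤_ D)) :
    S.cc t (S.act u s) = S.act (S.cc t u) s := by
  have e : (Limits.prod.associator X Y (⊤_ D)).inv ≫ prod.fst =
      prod.map (𝟙 X) (prod.fst : Y ⨯ ⊤_ D ⟶ Y) := by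
    apply Limits.prod.hom_ext <;> simp [prod.lift_fst, prod.lift_snd, prod.lift_fst_assoc, prod.lift_snd_assoc]
  conv_rhs => rw [act, ← cc_assoc', Category.assoc, ← S.T.map_comp, e]
  rw [cc_map, S.T.map_id, Category.comp_id]
  rfl

lemma cc_act_left {A X Y : D} (t : A ⟶ S.T.obj X) (u : A ⟶ S.T.obj Y)
    (s : A ⟶ S.T.obj (⊤_ D)) :
    S.cc (S.act t s) u = S.act (S.cc t u) s := by
  have e : (Limits.prod.associator X (⊤_ D) Y).inv ≫
      prod.map (prod.fst : X ⨯ ⊤_ D ⟶ X) (𝟙 Y) =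
      prod.map (𝟙 X) (prod.snd : (⊤_ D) ⨯ Y ⟶ Y) := by
    apply Limits.prod.hom_ext <;> simp [prod.lift_fst, prod.lift_snd, prod.lift_fst_assoc, prod.lift_snd_assoc]
  have e1 : S.cc (S.act t s) u =
      S.cc (S.cc t s) u ≫ S.T.map (prod.map prod.fst (𝟙 Y)) := by
    rw [cc_map, S.T.map_id, Category.comp_id]; rfl
  rw [e1, ← cc_assoc', Category.assoc, ← S.T.map_comp, e, cc_map, S.T.map_id,
    Category.comp_id, cc_snd, mass_top, cc_act_right]

lemma mul_comm' {A : D} (s s' : A ⟶ S.T.obj (⊤_ D)) : S.mul s s' = S.mul s' s := by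
  rw [mul_cc, mul_cc]
  conv_lhs => rw [show terminal.from ((⊤_ D) ⨯ (⊤_ D)) =
      (prod.braiding (⊤_ D) (⊤_ D)).hom ≫ terminal.from ((⊤_ D) ⨯ (⊤_ D))
      from terminal.hom_ext _ _,
    S.T.map_comp]
  rw [← Category.assoc, cc_symm']

lemma mul_assoc' {A : D} (s s' s'' : A ⟶ S.T.obj (⊤_ D)) :
    S.mul (S.mul s s') s'' = S.mul s (S.mul s' s'') := by
  calc S.mul (S.mul s s') s'' = S.act (S.act s s') s'' := by
        rw [mul_eq_act, mul_eq_act]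
    _ = S.act s (S.mul s' s'') := act_act S s s' s''
    _ = S.mul s (S.mul s' s'') := (S.mul_eq_act _ _).symm

lemma mul_one_right {A : D} (s : A ⟶ S.T.obj (⊤_ D)) :
    S.mul s (terminal.from A ≫ S.unitOne) = s := by
  rw [mul_eq_act, act_one]

lemma mul_one_left {A : D} (s : A ⟶ S.T.obj (⊤_ D)) :
    S.mul (terminal.from A ≫ S.unitOne) s = s := by
  rw [mul_comm', mul_one_right]

lemma mul_self_inv {A : D} {ι : S.T.obj (⊤_ D) ⟶ S.T.obj (⊤_ D)}
    (hι : prod.lift (𝟙 _) ι ≫ S.unitMul = terminal.from _ ≫ S.unitOne)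
    (s : A ⟶ S.T.obj (⊤_ D)) :
    S.mul s (s ≫ ι) = terminal.from A ≫ S.unitOne := by
  have : prod.lift s (s ≫ ι) = s ≫ prod.lift (𝟙 _) ι := by
    rw [prod.comp_lift, Category.comp_id]
  rw [mul, this, Category.assoc, hι, ← Category.assoc, terminal.comp_from]

lemma act_cancel {A X : D} {ι : S.T.obj (⊤_ D) ⟶ S.T.obj (⊤_ D)}
    (hι : prod.lift (𝟙 _) ι ≫ S.unitMul = terminal.from _ ≫ S.unitOne)
    (t : A ⟶ S.T.obj X) (s : A ⟶ S.T.obj (⊤_ D)) :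
    S.act (S.act t s) (s ≫ ι) = t := by
  rw [act_act, mul_self_inv S hι, act_one]

lemma cc_unit_right {A X : D} (t : A ⟶ S.T.obj X) :
    S.cc t (terminal.from A ≫ S.unitOne) =
      t ≫ S.T.map (prod.rightUnitor X).inv := by
  rw [← cancel_mono (S.T.map (prod.rightUnitor X).hom), prod.rightUnitor_hom]
  have h2 := S.act_one t
  rw [act] at h2
  rw [Category.assoc, h2, ← S.T.map_comp,
    show (Limits.prod.rightUnitor X).inv ≫ prod.fst = 𝟙 X from by simp [prod.lift_fst, prod.lift_snd, prod.lift_fst_assoc, prod.lift_snd_assoc],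
    S.T.map_id, Category.comp_id]

lemma cc_unit_left {A X : D} (t : A ⟶ S.T.obj X) :
    S.cc (terminal.from A ≫ S.unitOne) t =
      t ≫ S.T.map (prod.leftUnitor X).inv := by
  rw [← cancel_mono (S.T.map (prod.leftUnitor X).hom), prod.leftUnitor_hom,
    Category.assoc, cc_snd, mass_top]
  rw [act_one, ← S.T.map_comp,
    show (Limits.prod.leftUnitor X).inv ≫ prod.snd = 𝟙 X from by simp [prod.lift_fst, prod.lift_snd, prod.lift_fst_assoc, prod.lift_snd_assoc],
    S.T.map_id, Category.comp_id]

end CommMonad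


namespace CommMonad

variable (S : CommMonad D)

section Key

variable {ι : S.T.obj (⊤_ D) ⟶ S.T.obj (⊤_ D)}

/-- Any middle component of a factorization is determined. -/
lemma mid_unique (hι : prod.lift (𝟙 _) ι ≫ S.unitMul = terminal.from _ ≫ S.unitOne)
    {A X Y : D} (f₁ : A ⟶ S.T.obj X) (l₂ : A ⟶ S.T.obj Y) :
    l₂ = S.act ((S.cc f₁ l₂) ≫ S.T.map prod.snd) (S.mass f₁ ≫ ι) := by
  rw [cc_snd]
  exact (S.act_cancel hι l₂ (S.mass f₁)).symm

variable {X Y Z A : D} (f₁ : A ⟶ S.T.obj X) (f₂₃ : A ⟶ S.T.obj (Y ⨯ Z))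
  (g₁₂ : A ⟶ S.T.obj (X ⨯ Y)) (g₃ : A ⟶ S.T.obj Z)

lemma keyR2 (w : S.cc f₁ f₂₃ ≫ S.T.map (Limits.prod.associator X Y Z).inv = S.cc g₁₂ g₃) : S.cc f₁ (f₂₃ ≫ S.T.map prod.fst) = S.act g₁₂ (S.mass g₃) := by
  have eA : (Limits.prod.associator X Y Z).inv ≫ prod.fst =
      prod.map (𝟙 X) (prod.fst : Y ⨯ Z ⟶ Y) := by
    apply Limits.prod.hom_ext <;> simp [prod.lift_fst, prod.lift_snd, prod.lift_fst_assoc, prod.lift_snd_assoc]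
  rw [← cc_fst, ← w, Category.assoc, ← S.T.map_comp, eA, cc_map, S.T.map_id,
    Category.comp_id]

lemma keyR1 (w : S.cc f₁ f₂₃ ≫ S.T.map (Limits.prod.associator X Y Z).inv = S.cc g₁₂ g₃) : S.act f₂₃ (S.mass f₁) = S.cc (g₁₂ ≫ S.T.map prod.snd) g₃ := by
  have eB : (prod.snd : X ⨯ (Y ⨯ Z) ⟶ Y ⨯ Z) =
      (Limits.prod.associator X Y Z).inv ≫ prod.map (prod.snd : X ⨯ Y ⟶ Y) (𝟙 Z) := by
    apply Limits.prod.hom_ext <;> simp [prod.lift_fst, prod.lift_snd, prod.lift_fst_assoc, prod.lift_snd_assoc]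
  rw [← cc_snd, eB, S.T.map_comp, ← Category.assoc, w, cc_map, S.T.map_id,
    Category.comp_id]

lemma keyR3 (w : S.cc f₁ f₂₃ ≫ S.T.map (Limits.prod.associator X Y Z).inv = S.cc g₁₂ g₃) : S.act (f₂₃ ≫ S.T.map prod.fst) (S.mass f₁) =
    S.act (g₁₂ ≫ S.T.map prod.snd) (S.mass g₃) := by
  have := congrArg (· ≫ S.T.map (prod.snd : X ⨯ Y ⟶ Y)) (S.keyR2 f₁ f₂₃ g₁₂ g₃ w)
  simpa only [cc_snd, act_map] using this

/-- The canonical middle component. -/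
noncomputable def midMap : A ⟶ S.T.obj Y :=
  S.act (g₁₂ ≫ S.T.map prod.snd) (S.mass f₁ ≫ ι)

lemma midMap_eq (hι : prod.lift (𝟙 _) ι ≫ S.unitMul = terminal.from _ ≫ S.unitOne) (w : S.cc f₁ f₂₃ ≫ S.T.map (Limits.prod.associator X Y Z).inv = S.cc g₁₂ g₃) : S.midMap (ι := ι) f₁ g₁₂ =
    S.act (f₂₃ ≫ S.T.map prod.fst) (S.mass g₃ ≫ ι) := by
  set w1 := g₁₂ ≫ S.T.map prod.snd
  set w2 := f₂₃ ≫ S.T.map prod.fst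
  set p := S.mass f₁
  set ν := S.mass g₃
  have R3 : S.act w2 p = S.act w1 ν := S.keyR3 f₁ f₂₃ g₁₂ g₃ w
  have halg : S.mul p (S.mul (ν ≫ ι) (p ≫ ι)) = ν ≫ ι := by
    rw [mul_comm' S (ν ≫ ι) (p ≫ ι), ← mul_assoc', mul_self_inv S hι, mul_one_left]
  calc S.midMap (ι := ι) f₁ g₁₂
      = S.act w1 (p ≫ ι) := rfl
    _ = S.act (S.act (S.act w1 ν) (ν ≫ ι)) (p ≫ ι) := by
        rw [S.act_cancel hι w1 ν]
    _ = S.act (S.act (S.act w2 p) (ν ≫ ι)) (p ≫ ι) := by rw [← R3]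
    _ = S.act w2 (S.mul p (S.mul (ν ≫ ι) (p ≫ ι))) := by
        rw [act_act, act_act]
    _ = S.act w2 (ν ≫ ι) := by rw [halg]

lemma key_exA (hι : prod.lift (𝟙 _) ι ≫ S.unitMul = terminal.from _ ≫ S.unitOne) (w : S.cc f₁ f₂₃ ≫ S.T.map (Limits.prod.associator X Y Z).inv = S.cc g₁₂ g₃) : S.cc (S.midMap (ι := ι) f₁ g₁₂) g₃ = f₂₃ := by
  rw [midMap, cc_act_left, ← S.keyR1 f₁ f₂₃ g₁₂ g₃ w, S.act_cancel hι]

lemma key_exB (hι : prod.lift (𝟙 _) ι ≫ S.unitMul = terminal.from _ ≫ S.unitOne) (w : S.cc f₁ f₂₃ ≫ S.T.map (Limits.prod.associator X Y Z).inv = S.cc g₁₂ g₃) : S.cc f₁ (S.midMap (ι := ι) f₁ g₁₂) = g₁₂ := by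
  rw [S.midMap_eq f₁ f₂₃ g₁₂ g₃ hι w, cc_act_right,
    S.keyR2 f₁ f₂₃ g₁₂ g₃ w, S.act_cancel hι]

end Key

end CommMonad

/-- Main theorem: a commutative monad `T` on a cartesian monoidal category is
weakly affine (`T1` is an internal group) if and only if for all objects
`X, Y, Z` the associativity square
`TX ⨯ TY ⨯ TZ → TX ⨯ T(Y ⨯ Z), T(X ⨯ Y) ⨯ TZ → T(X ⨯ Y ⨯ Z)`
with maps `id ⨯ c_{Y,Z}`, `c_{X,Y} ⨯ id`, `c_{X,Y⨯Z}`, `c_{X⨯Y,Z}` is a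
pullback in `D`. -/
theorem stmt19 {D : Type u} [Category.{v} D] [HasFiniteProducts D]
    (S : CommMonad D) :
    S.WeaklyAffine ↔
    (∀ X Y Z : D,
      IsPullback
        (prod.map (𝟙 (S.T.obj X)) (S.c Y Z))
        ((Limits.prod.associator _ _ _).inv ≫
          prod.map (S.c X Y) (𝟙 (S.T.obj Z)))
        (S.c X (Y ⨯ Z) ≫ S.T.map (Limits.prod.associator X Y Z).inv)
        (S.c (X ⨯ Y) Z)) := by
  constructor
  · rintro ⟨ι, hι1, hι2⟩ X Y Z
    have sq : prod.map (𝟙 (S.T.obj X)) (S.c Y Z) ≫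
        (S.c X (Y ⨯ Z) ≫ S.T.map (Limits.prod.associator X Y Z).inv) =
        ((Limits.prod.associator _ _ _).inv ≫ prod.map (S.c X Y) (𝟙 (S.T.obj Z))) ≫
        S.c (X ⨯ Y) Z := by
      simpa only [Category.assoc] using S.c_assoc X Y Z
    apply IsPullback.of_isLimit (c := PullbackCone.mk _ _ sq)
    apply PullbackCone.IsLimit.mk sq
      (fun s => prod.lift (s.fst ≫ prod.fst)
        (prod.lift (S.midMap (ι := ι) (s.fst ≫ prod.fst) (s.snd ≫ prod.fst))
          (s.snd ≫ prod.snd)))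
    case fac_left =>
      intro s
      have hsf : prod.lift (s.fst ≫ prod.fst) (s.fst ≫ prod.snd) = s.fst := by
        apply Limits.prod.hom_ext
        · rw [prod.lift_fst]
        · rw [prod.lift_snd]
      have hsn : prod.lift (s.snd ≫ prod.fst) (s.snd ≫ prod.snd) = s.snd := by
        apply Limits.prod.hom_ext
        · rw [prod.lift_fst]
        · rw [prod.lift_snd]
      have w : S.cc (s.fst ≫ prod.fst) (s.fst ≫ prod.snd) ≫
          S.T.map (Limits.prod.associator X Y Z).inv =
          S.cc (s.snd ≫ prod.fst) (s.snd ≫ prod.snd) := by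
        rw [CommMonad.cc, CommMonad.cc, hsf, hsn, Category.assoc]
        exact s.condition
      have hA := S.key_exA (s.fst ≫ prod.fst) (s.fst ≫ prod.snd)
          (s.snd ≫ prod.fst) (s.snd ≫ prod.snd) hι1 w
      rw [CommMonad.cc] at hA
      apply Limits.prod.hom_ext
      · rw [Category.assoc, prod.map_fst, ← Category.assoc, prod.lift_fst,
          Category.comp_id]
      · rw [Category.assoc, prod.map_snd, ← Category.assoc, prod.lift_snd, hA]
    case fac_right =>
      intro s
      have hsf : prod.lift (s.fst ≫ prod.fst) (s.fst ≫ prod.snd) = s.fst := by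
        apply Limits.prod.hom_ext
        · rw [prod.lift_fst]
        · rw [prod.lift_snd]
      have hsn : prod.lift (s.snd ≫ prod.fst) (s.snd ≫ prod.snd) = s.snd := by
        apply Limits.prod.hom_ext
        · rw [prod.lift_fst]
        · rw [prod.lift_snd]
      have w : S.cc (s.fst ≫ prod.fst) (s.fst ≫ prod.snd) ≫
          S.T.map (Limits.prod.associator X Y Z).inv =
          S.cc (s.snd ≫ prod.fst) (s.snd ≫ prod.snd) := by
        rw [CommMonad.cc, CommMonad.cc, hsf, hsn, Category.assoc]
        exact s.condition
      have hB := S.key_exB (s.fst ≫ prod.fst) (s.fst ≫ prod.snd)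
          (s.snd ≫ prod.fst) (s.snd ≫ prod.snd) hι1 w
      rw [CommMonad.cc] at hB
      have e1 : (Limits.prod.associator (S.T.obj X) (S.T.obj Y) (S.T.obj Z)).inv ≫
          prod.map (S.c X Y) (𝟙 (S.T.obj Z)) ≫ prod.fst =
          prod.lift prod.fst (prod.snd ≫ prod.fst) ≫ S.c X Y := by
        rw [prod.map_fst, ← Category.assoc]
        congr 1
        apply Limits.prod.hom_ext <;> simp [prod.lift_fst, prod.lift_snd, prod.lift_fst_assoc, prod.lift_snd_assoc]
      have e2 : (Limits.prod.associator (S.T.obj X) (S.T.obj Y) (S.T.obj Z)).inv ≫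
          prod.map (S.c X Y) (𝟙 (S.T.obj Z)) ≫ prod.snd =
          prod.snd ≫ prod.snd := by
        rw [prod.map_snd]
        simp [prod.lift_fst, prod.lift_snd, prod.lift_fst_assoc, prod.lift_snd_assoc]
      apply Limits.prod.hom_ext
      · rw [Category.assoc, Category.assoc, e1, ← Category.assoc, prod.comp_lift,
          prod.lift_fst]
        simp only [prod.lift_snd_assoc, prod.lift_fst]
        exact hB
      · rw [Category.assoc, Category.assoc, e2]
        simp only [prod.lift_snd_assoc, prod.lift_snd]
    case uniq =>
      intro s m h1 h2
      have hfst : m ≫ prod.fst = s.fst ≫ prod.fst := by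
        have h := congrArg (· ≫ prod.fst) h1
        simp only [Category.assoc, prod.map_fst, Category.comp_id] at h
        exact h
      have hl3 : m ≫ prod.snd ≫ prod.snd = s.snd ≫ prod.snd := by
        have h := congrArg (· ≫ prod.snd) h2
        simp only [Category.assoc, prod.map_snd, Category.comp_id,
          prod.associator_inv] at h
        simpa [prod.lift_fst, prod.lift_snd, prod.lift_fst_assoc, prod.lift_snd_assoc] using h
      have e1 : (Limits.prod.associator (S.T.obj X) (S.T.obj Y) (S.T.obj Z)).inv ≫
          prod.map (S.c X Y) (𝟙 (S.T.obj Z)) ≫ prod.fst =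
          prod.lift prod.fst (prod.snd ≫ prod.fst) ≫ S.c X Y := by
        rw [prod.map_fst, ← Category.assoc]
        congr 1
        apply Limits.prod.hom_ext <;> simp [prod.lift_fst, prod.lift_snd, prod.lift_fst_assoc, prod.lift_snd_assoc]
      have hg : S.cc (s.fst ≫ prod.fst) (m ≫ prod.snd ≫ prod.fst) =
          s.snd ≫ prod.fst := by
        have h := congrArg (· ≫ prod.fst) h2
        simp only [Category.assoc] at h
        rw [e1, ← Category.assoc, prod.comp_lift] at h
        rw [CommMonad.cc, ← hfst]
        simpa only [Category.assoc] using h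
      have hmid : m ≫ prod.snd ≫ prod.fst =
          S.midMap (ι := ι) (s.fst ≫ prod.fst) (s.snd ≫ prod.fst) := by
        calc m ≫ prod.snd ≫ prod.fst
            = S.act ((S.cc (s.fst ≫ prod.fst) (m ≫ prod.snd ≫ prod.fst)) ≫
                S.T.map prod.snd) (S.mass (s.fst ≫ prod.fst) ≫ ι) :=
              S.mid_unique hι1 _ _
          _ = S.midMap (ι := ι) (s.fst ≫ prod.fst) (s.snd ≫ prod.fst) := by
              rw [hg]; rfl
      apply Limits.prod.hom_ext
      · rw [prod.lift_fst, hfst]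
      · apply Limits.prod.hom_ext
        · rw [Category.assoc, prod.lift_snd, prod.lift_fst, ← Category.assoc, ← hmid,
            Category.assoc]
        · rw [Category.assoc, prod.lift_snd, prod.lift_snd, ← Category.assoc, ← hl3,
            Category.assoc]
  · intro h
    have hP := h (⊤_ D) (⊤_ D) (⊤_ D)
    set M := S.T.obj (⊤_ D) with hM
    set u : M ⟶ S.T.obj ((⊤_ D) ⨯ (⊤_ D)) :=
      terminal.from M ≫ S.unitOne ≫ S.T.map (prod.rightUnitor (⊤_ D)).inv with hu
    have hext : ∀ f g : (⊤_ D) ⟶ ((⊤_ D) ⨯ (⊤_ D)) ⨯ (⊤_ D), f = g := by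
      intro f g
      apply Limits.prod.hom_ext
      · apply Limits.prod.hom_ext <;> apply terminal.hom_ext
      · apply terminal.hom_ext
    have hL : S.cc (𝟙 M) u =
        S.T.map ((prod.rightUnitor (⊤_ D)).inv ≫
          prod.map (𝟙 (⊤_ D)) (prod.rightUnitor (⊤_ D)).inv) := by
      have hu2 : u = (terminal.from M ≫ S.unitOne) ≫
          S.T.map (prod.rightUnitor (⊤_ D)).inv := (Category.assoc _ _ _).symm
      rw [hu2]
      have h2 := S.cc_map (𝟙 M) (terminal.from M ≫ S.unitOne)
        (𝟙 (⊤_ D)) (prod.rightUnitor (⊤_ D)).inv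
      rw [S.T.map_id, Category.comp_id] at h2
      rw [← h2, S.cc_unit_right (𝟙 M), Category.id_comp, ← S.T.map_comp]
    have hR : S.cc u (𝟙 M) =
        S.T.map ((prod.leftUnitor (⊤_ D)).inv ≫
          prod.map (prod.rightUnitor (⊤_ D)).inv (𝟙 (⊤_ D))) := by
      have hu2 : u = (terminal.from M ≫ S.unitOne) ≫
          S.T.map (prod.rightUnitor (⊤_ D)).inv := (Category.assoc _ _ _).symm
      rw [hu2]
      have h2 := S.cc_map (terminal.from M ≫ S.unitOne) (𝟙 M)
        (prod.rightUnitor (⊤_ D)).inv (𝟙 (⊤_ D))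
      rw [S.T.map_id, Category.comp_id] at h2
      rw [← h2, S.cc_unit_left (𝟙 M), Category.id_comp, ← S.T.map_comp]
    have hcomm : prod.lift (𝟙 M) u ≫
        (S.c (⊤_ D) ((⊤_ D) ⨯ (⊤_ D)) ≫
          S.T.map (Limits.prod.associator (⊤_ D) (⊤_ D) (⊤_ D)).inv) =
        prod.lift u (𝟙 M) ≫ S.c ((⊤_ D) ⨯ (⊤_ D)) (⊤_ D) := by
      have e0 : prod.lift (𝟙 M) u ≫ S.c (⊤_ D) ((⊤_ D) ⨯ (⊤_ D)) = S.cc (𝟙 M) u := rfl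
      have e0' : prod.lift u (𝟙 M) ≫ S.c ((⊤_ D) ⨯ (⊤_ D)) (⊤_ D) = S.cc u (𝟙 M) := rfl
      rw [← Category.assoc, e0, e0', hL, hR, ← S.T.map_comp]
      congr 1
      apply hext
    set k := hP.lift (prod.lift (𝟙 M) u) (prod.lift u (𝟙 M)) hcomm with hk
    have hfst := hP.lift_fst (prod.lift (𝟙 M) u) (prod.lift u (𝟙 M)) hcomm
    have hsnd := hP.lift_snd (prod.lift (𝟙 M) u) (prod.lift u (𝟙 M)) hcomm
    set ι : M ⟶ M := k ≫ prod.snd ≫ prod.fst with hι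
    set l1 : M ⟶ M := k ≫ prod.fst with hl1
    set l3 : M ⟶ M := k ≫ prod.snd ≫ prod.snd with hl3
    have h_l1 : l1 = 𝟙 M := by
      have hh := congrArg (· ≫ prod.fst) hfst
      simp only [Category.assoc, prod.map_fst, Category.comp_id, prod.lift_fst] at hh
      rw [hl1, ← hh]
    have h_mid : S.cc ι l3 = u := by
      have hh := congrArg (· ≫ prod.snd) hfst
      simp only [Category.assoc, prod.map_snd, prod.lift_snd] at hh
      have hksnd : k ≫ prod.snd = prod.lift ι l3 := by
        apply Limits.prod.hom_ext
        · rw [prod.lift_fst, hι, Category.assoc]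
        · rw [prod.lift_snd, hl3, Category.assoc]
      rw [CommMonad.cc, ← hksnd, Category.assoc]
      exact hh
    have h_l3 : l3 = 𝟙 M := by
      have hh := congrArg (· ≫ prod.snd) hsnd
      simp only [Category.assoc, prod.map_snd, Category.comp_id, prod.lift_snd] at hh
      have e2 : (Limits.prod.associator M M M).inv ≫ prod.snd = prod.snd ≫ prod.snd := by
        simp [prod.lift_fst, prod.lift_snd, prod.lift_fst_assoc, prod.lift_snd_assoc]
      rw [e2] at hh
      rw [hl3, ← hh]
    have h_first : S.cc l1 ι = u := by
      have hh := congrArg (· ≫ prod.fst) hsnd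
      simp only [Category.assoc, prod.map_fst, prod.lift_fst] at hh
      have e1 : (Limits.prod.associator (S.T.obj (⊤_ D)) (S.T.obj (⊤_ D))
          (S.T.obj (⊤_ D))).inv ≫ prod.fst ≫ S.c (⊤_ D) (⊤_ D) =
          prod.lift prod.fst (prod.snd ≫ prod.fst) ≫ S.c (⊤_ D) (⊤_ D) := by
        rw [← Category.assoc]
        congr 1
        apply Limits.prod.hom_ext <;> simp [prod.lift_fst, prod.lift_snd, prod.lift_fst_assoc, prod.lift_snd_assoc]
      rw [e1] at hh
      have hkl : k ≫ prod.lift prod.fst (prod.snd ≫ prod.fst) = prod.lift l1 ι := by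
        rw [prod.comp_lift, hl1, hι]
      rw [← Category.assoc, hkl] at hh
      rw [CommMonad.cc]
      exact hh
    have hu_mass : u ≫ S.T.map (terminal.from ((⊤_ D) ⨯ (⊤_ D))) =
        terminal.from M ≫ S.unitOne := by
      rw [hu, Category.assoc, Category.assoc, ← S.T.map_comp,
        show (prod.rightUnitor (⊤_ D)).inv ≫ terminal.from ((⊤_ D) ⨯ (⊤_ D)) =
          𝟙 (⊤_ D) from terminal.hom_ext _ _, S.T.map_id, Category.comp_id]
    refine ⟨ι, ?_, ?_⟩
    · have := congrArg (· ≫ S.T.map (terminal.from ((⊤_ D) ⨯ (⊤_ D)))) h_first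
      rw [h_l1] at this
      simp only [CommMonad.cc, Category.assoc] at this
      rw [hu_mass] at this
      rw [CommMonad.unitMul]
      exact this
    · have := congrArg (· ≫ S.T.map (terminal.from ((⊤_ D) ⨯ (⊤_ D)))) h_mid
      rw [h_l3] at this
      simp only [CommMonad.cc, Category.assoc] at this
      rw [hu_mass] at this
      rw [CommMonad.unitMul]
      exact this
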